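/- The set of minimal elements (with respect to the partial order on Ṽ) of {v ∈ Ṽ : ρ(v) > 4} is exactly K̂ = {(1,1,1,1,1), (2,1,1,1), (3,2,2), (4,3,1), (6,2,1)}. -/

import Mathlib

/-- `ρ(n) = 1 + (n−1)/(n+1)`; note that this gives `ρ(0) = 0`. -/
noncomputable def rho (n : ℕ) : ℝ := 1 + ((n : ℝ) - 1) / ((n : ℝ) + 1)

/-- The element of `Ṽ` whose entries are those of the list `l` (then zeros). -/
def ofList (l : List ℕ) : ℕ → ℕ := fun i => l.getD i 0

/-- Membership in `Ṽ`: a nonincreasing, finitely supported sequence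
of nonnegative integers. -/
def IsVt (v : ℕ → ℕ) : Prop :=
  (∀ i j, i ≤ j → v j ≤ v i) ∧ ∃ s, ∀ i, s ≤ i → v i = 0

/-- `ρ(v) = Σ_i ρ(v_i)`, a finite sum since `ρ(0) = 0` and `v` is finitely
supported. -/
noncomputable def rhoV (v : ℕ → ℕ) : ℝ := ∑ᶠ i, rho (v i)

lemma rho_eq (n : ℕ) : rho n = 2 - 2 / ((n : ℝ) + 1) := by
  have h : ((n:ℝ) + 1) ≠ 0 := by positivity
  unfold rho; field_simp; ring

lemma rho_zero : rho 0 = 0 := by simp [rho]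

lemma rho_mono {m n : ℕ} (h : m ≤ n) : rho m ≤ rho n := by
  rw [rho_eq, rho_eq]
  have h1 : (0:ℝ) < (m:ℝ) + 1 := by positivity
  have h2 : (m:ℝ) + 1 ≤ (n:ℝ) + 1 := by
    have : (m:ℝ) ≤ n := by exact_mod_cast h
    linarith
  have := div_le_div_of_nonneg_left (by norm_num : (0:ℝ) ≤ 2) h1 h2
  linarith

lemma rho_lt_two (n : ℕ) : rho n < 2 := by
  rw [rho_eq]
  have : (0:ℝ) < 2/((n:ℝ)+1) := by positivity
  linarith

lemma rhoV_eq_sum (v : ℕ → ℕ) (s : ℕ) (h : ∀ i, s ≤ i → v i = 0) :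
    rhoV v = ∑ i ∈ Finset.range s, rho (v i) := by
  apply finsum_eq_finset_sum_of_support_subset
  intro i hi
  simp only [Function.mem_support] at hi
  simp only [Finset.coe_range, Set.mem_Iio]
  by_contra hcon
  push_neg at hcon
  rw [h i hcon, rho_zero] at hi
  exact hi rfl

lemma isVt_ofList (l : List ℕ) (hl : l.Pairwise (· ≥ ·)) : IsVt (ofList l) := by
  constructor
  · intro i j hij
    by_cases hj : j < l.length
    · have hi : i < l.length := lt_of_le_of_lt hij hj
      rw [ofList, ofList, List.getD_eq_getElem _ _ hj, List.getD_eq_getElem _ _ hi]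
      rcases eq_or_lt_of_le hij with rfl | hlt
      · exact le_refl _
      · exact List.pairwise_iff_getElem.mp hl i j hi hj hlt
    · push_neg at hj
      rw [ofList, List.getD_eq_default _ _ hj]
      exact Nat.zero_le _
  · exact ⟨l.length, fun i hi => List.getD_eq_default _ _ hi⟩

section helpers

lemma le3 (a b c : ℕ) (v : ℕ → ℕ) (h0 : a ≤ v 0) (h1 : b ≤ v 1) (h2 : c ≤ v 2) :
    ∀ i, ofList [a,b,c] i ≤ v i := fun i =>
  match i with
  | 0 => h0 | 1 => h1 | 2 => h2
  | (n+3) => by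
      have : ofList [a,b,c] (n+3) = 0 := rfl
      rw [this]; exact Nat.zero_le _

lemma le4 (a b c d : ℕ) (v : ℕ → ℕ) (h0 : a ≤ v 0) (h1 : b ≤ v 1) (h2 : c ≤ v 2)
    (h3 : d ≤ v 3) : ∀ i, ofList [a,b,c,d] i ≤ v i := fun i =>
  match i with
  | 0 => h0 | 1 => h1 | 2 => h2 | 3 => h3
  | (n+4) => by
      have : ofList [a,b,c,d] (n+4) = 0 := rfl
      rw [this]; exact Nat.zero_le _

lemma le5 (a b c d e : ℕ) (v : ℕ → ℕ) (h0 : a ≤ v 0) (h1 : b ≤ v 1) (h2 : c ≤ v 2)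
    (h3 : d ≤ v 3) (h4 : e ≤ v 4) : ∀ i, ofList [a,b,c,d,e] i ≤ v i := fun i =>
  match i with
  | 0 => h0 | 1 => h1 | 2 => h2 | 3 => h3 | 4 => h4
  | (n+5) => by
      have : ofList [a,b,c,d,e] (n+5) = 0 := rfl
      rw [this]; exact Nat.zero_le _

lemma eq_ofList3 (a b c : ℕ) (v : ℕ → ℕ) (h0 : v 0 = a) (h1 : v 1 = b) (h2 : v 2 = c)
    (hz : ∀ i, 3 ≤ i → v i = 0) : v = ofList [a,b,c] := by
  funext i
  match i with
  | 0 => exact h0 | 1 => exact h1 | 2 => exact h2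
  | (n+3) => rw [hz (n+3) (by omega)]; rfl

lemma eq_ofList4 (a b c d : ℕ) (v : ℕ → ℕ) (h0 : v 0 = a) (h1 : v 1 = b) (h2 : v 2 = c)
    (h3 : v 3 = d) (hz : ∀ i, 4 ≤ i → v i = 0) : v = ofList [a,b,c,d] := by
  funext i
  match i with
  | 0 => exact h0 | 1 => exact h1 | 2 => exact h2 | 3 => exact h3
  | (n+4) => rw [hz (n+4) (by omega)]; rfl

lemma eq_ofList5 (a b c d e : ℕ) (v : ℕ → ℕ) (h0 : v 0 = a) (h1 : v 1 = b) (h2 : v 2 = c)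
    (h3 : v 3 = d) (h4 : v 4 = e) (hz : ∀ i, 5 ≤ i → v i = 0) : v = ofList [a,b,c,d,e] := by
  funext i
  match i with
  | 0 => exact h0 | 1 => exact h1 | 2 => exact h2 | 3 => exact h3 | 4 => exact h4
  | (n+5) => rw [hz (n+5) (by omega)]; rfl

end helpers

section numeric

lemma key11111 (x y z u t : ℕ) (hx : x ≤ 1) (hy : y ≤ 1) (hz : z ≤ 1) (hu : u ≤ 1)
    (ht : t ≤ 1) (h : rho x + rho y + rho z + rho u + rho t > 4) :
    x = 1 ∧ y = 1 ∧ z = 1 ∧ u = 1 ∧ t = 1 := by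
  interval_cases x <;> interval_cases y <;> interval_cases z <;> interval_cases u <;>
    interval_cases t <;> revert h <;> norm_num [rho]

lemma key2111 (x y z u : ℕ) (hx : x ≤ 2) (hy : y ≤ 1) (hz : z ≤ 1) (hu : u ≤ 1)
    (h : rho x + rho y + rho z + rho u > 4) : x = 2 ∧ y = 1 ∧ z = 1 ∧ u = 1 := by
  interval_cases x <;> interval_cases y <;> interval_cases z <;> interval_cases u <;>
    revert h <;> norm_num [rho]

lemma key322 (x y z : ℕ) (hx : x ≤ 3) (hy : y ≤ 2) (hz : z ≤ 2)
    (h : rho x + rho y + rho z > 4) : x = 3 ∧ y = 2 ∧ z = 2 := by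
  interval_cases x <;> interval_cases y <;> interval_cases z <;> revert h <;> norm_num [rho]

lemma key431 (x y z : ℕ) (hx : x ≤ 4) (hy : y ≤ 3) (hz : z ≤ 1)
    (h : rho x + rho y + rho z > 4) : x = 4 ∧ y = 3 ∧ z = 1 := by
  interval_cases x <;> interval_cases y <;> interval_cases z <;> revert h <;> norm_num [rho]

lemma key621 (x y z : ℕ) (hx : x ≤ 6) (hy : y ≤ 2) (hz : z ≤ 1)
    (h : rho x + rho y + rho z > 4) : x = 6 ∧ y = 2 ∧ z = 1 := by
  interval_cases x <;> interval_cases y <;> interval_cases z <;> revert h <;> norm_num [rho]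

lemma gt11111 : rhoV (ofList [1,1,1,1,1]) > 4 := by
  rw [rhoV_eq_sum (ofList [1,1,1,1,1]) 5 (fun i hi => List.getD_eq_default _ _ (by simpa using hi))]
  simp [Finset.sum_range_succ, ofList, rho]; norm_num

lemma gt2111 : rhoV (ofList [2,1,1,1]) > 4 := by
  rw [rhoV_eq_sum (ofList [2,1,1,1]) 4 (fun i hi => List.getD_eq_default _ _ (by simpa using hi))]
  simp [Finset.sum_range_succ, ofList, rho]; norm_num

lemma gt322 : rhoV (ofList [3,2,2]) > 4 := by
  rw [rhoV_eq_sum (ofList [3,2,2]) 3 (fun i hi => List.getD_eq_default _ _ (by simpa using hi))]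
  simp [Finset.sum_range_succ, ofList, rho]; norm_num

lemma gt431 : rhoV (ofList [4,3,1]) > 4 := by
  rw [rhoV_eq_sum (ofList [4,3,1]) 3 (fun i hi => List.getD_eq_default _ _ (by simpa using hi))]
  simp [Finset.sum_range_succ, ofList, rho]; norm_num

lemma gt621 : rhoV (ofList [6,2,1]) > 4 := by
  rw [rhoV_eq_sum (ofList [6,2,1]) 3 (fun i hi => List.getD_eq_default _ _ (by simpa using hi))]
  simp [Finset.sum_range_succ, ofList, rho]; norm_num

end numeric

section minimal

lemma hz_of_le (l : List ℕ) (v : ℕ → ℕ) (hle : ∀ i, v i ≤ ofList l i) :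
    ∀ i, l.length ≤ i → v i = 0 := fun i hi =>
  Nat.le_zero.mp (le_of_le_of_eq (hle i) (List.getD_eq_default _ _ hi))

lemma min11111 (v : ℕ → ℕ) (hle : ∀ i, v i ≤ ofList [1,1,1,1,1] i) (h4 : rhoV v > 4) :
    v = ofList [1,1,1,1,1] := by
  have hz := hz_of_le [1,1,1,1,1] v hle
  rw [rhoV_eq_sum v 5 (by simpa using hz)] at h4
  simp only [Finset.sum_range_succ, Finset.sum_range_zero, zero_add] at h4
  obtain ⟨e0, e1, e2, e3, e4⟩ := key11111 _ _ _ _ _ (hle 0) (hle 1) (hle 2) (hle 3) (hle 4) h4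
  exact eq_ofList5 1 1 1 1 1 v e0 e1 e2 e3 e4 (by simpa using hz)

lemma min2111 (v : ℕ → ℕ) (hle : ∀ i, v i ≤ ofList [2,1,1,1] i) (h4 : rhoV v > 4) :
    v = ofList [2,1,1,1] := by
  have hz := hz_of_le [2,1,1,1] v hle
  rw [rhoV_eq_sum v 4 (by simpa using hz)] at h4
  simp only [Finset.sum_range_succ, Finset.sum_range_zero, zero_add] at h4
  obtain ⟨e0, e1, e2, e3⟩ := key2111 _ _ _ _ (hle 0) (hle 1) (hle 2) (hle 3) h4
  exact eq_ofList4 2 1 1 1 v e0 e1 e2 e3 (by simpa using hz)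

lemma min322 (v : ℕ → ℕ) (hle : ∀ i, v i ≤ ofList [3,2,2] i) (h4 : rhoV v > 4) :
    v = ofList [3,2,2] := by
  have hz := hz_of_le [3,2,2] v hle
  rw [rhoV_eq_sum v 3 (by simpa using hz)] at h4
  simp only [Finset.sum_range_succ, Finset.sum_range_zero, zero_add] at h4
  obtain ⟨e0, e1, e2⟩ := key322 _ _ _ (hle 0) (hle 1) (hle 2) h4
  exact eq_ofList3 3 2 2 v e0 e1 e2 (by simpa using hz)

lemma min431 (v : ℕ → ℕ) (hle : ∀ i, v i ≤ ofList [4,3,1] i) (h4 : rhoV v > 4) :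
    v = ofList [4,3,1] := by
  have hz := hz_of_le [4,3,1] v hle
  rw [rhoV_eq_sum v 3 (by simpa using hz)] at h4
  simp only [Finset.sum_range_succ, Finset.sum_range_zero, zero_add] at h4
  obtain ⟨e0, e1, e2⟩ := key431 _ _ _ (hle 0) (hle 1) (hle 2) h4
  exact eq_ofList3 4 3 1 v e0 e1 e2 (by simpa using hz)

lemma min621 (v : ℕ → ℕ) (hle : ∀ i, v i ≤ ofList [6,2,1] i) (h4 : rhoV v > 4) :
    v = ofList [6,2,1] := by
  have hz := hz_of_le [6,2,1] v hle
  rw [rhoV_eq_sum v 3 (by simpa using hz)] at h4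
  simp only [Finset.sum_range_succ, Finset.sum_range_zero, zero_add] at h4
  obtain ⟨e0, e1, e2⟩ := key621 _ _ _ (hle 0) (hle 1) (hle 2) h4
  exact eq_ofList3 6 2 1 v e0 e1 e2 (by simpa using hz)

end minimal

lemma exists_key (v : ℕ → ℕ) (hv : IsVt v) (h4 : rhoV v > 4) :
    (∀ i, ofList [1,1,1,1,1] i ≤ v i) ∨ (∀ i, ofList [2,1,1,1] i ≤ v i) ∨
    (∀ i, ofList [3,2,2] i ≤ v i) ∨ (∀ i, ofList [4,3,1] i ≤ v i) ∨
    (∀ i, ofList [6,2,1] i ≤ v i) := by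
  obtain ⟨hmono, _, _⟩ := hv
  have m01 : v 1 ≤ v 0 := hmono 0 1 (by omega)
  have m12 : v 2 ≤ v 1 := hmono 1 2 (by omega)
  have m23 : v 3 ≤ v 2 := hmono 2 3 (by omega)
  have m34 : v 4 ≤ v 3 := hmono 3 4 (by omega)
  have r1 : rho 1 = 1 := by norm_num [rho]
  have r2 : rho 2 = 4/3 := by norm_num [rho]
  have r3 : rho 3 = 3/2 := by norm_num [rho]
  have r5 : rho 5 = 5/3 := by norm_num [rho]
  by_cases h5 : 1 ≤ v 4
  · exact Or.inl (le5 1 1 1 1 1 v (by omega) (by omega) (by omega) (by omega) h5)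
  · push_neg at h5
    have hv4 : v 4 = 0 := by omega
    by_cases h3 : 1 ≤ v 3
    · by_cases h02 : 2 ≤ v 0
      · exact Or.inr (Or.inl (le4 2 1 1 1 v h02 (by omega) (by omega) h3))
      · exfalso
        have hz : ∀ i, 4 ≤ i → v i = 0 := fun i hi =>
          Nat.le_zero.mp (hv4 ▸ hmono 4 i hi)
        rw [rhoV_eq_sum v 4 hz] at h4
        simp only [Finset.sum_range_succ, Finset.sum_range_zero, zero_add] at h4
        have e0 := rho_mono (show v 0 ≤ 1 by omega)
        have e1 := rho_mono (show v 1 ≤ 1 by omega)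
        have e2 := rho_mono (show v 2 ≤ 1 by omega)
        have e3 := rho_mono (show v 3 ≤ 1 by omega)
        linarith
    · push_neg at h3
      have hv3 : v 3 = 0 := by omega
      have hz : ∀ i, 3 ≤ i → v i = 0 := fun i hi =>
        Nat.le_zero.mp (hv3 ▸ hmono 3 i hi)
      rw [rhoV_eq_sum v 3 hz] at h4
      simp only [Finset.sum_range_succ, Finset.sum_range_zero, zero_add] at h4
      by_cases hc2 : 2 ≤ v 2
      · by_cases ha3 : 3 ≤ v 0
        · exact Or.inr (Or.inr (Or.inl (le3 3 2 2 v ha3 (by omega) hc2)))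
        · exfalso
          have e0 := rho_mono (show v 0 ≤ 2 by omega)
          have e1 := rho_mono (show v 1 ≤ 2 by omega)
          have e2 := rho_mono (show v 2 ≤ 2 by omega)
          linarith
      · push_neg at hc2
        by_cases hb3 : 3 ≤ v 1
        · by_cases hcz : v 2 = 0
          · exfalso
            rw [hcz, rho_zero] at h4
            linarith [rho_lt_two (v 0), rho_lt_two (v 1)]
          · have hc1 : v 2 = 1 := by omega
            by_cases ha4 : 4 ≤ v 0
            · exact Or.inr (Or.inr (Or.inr (Or.inl (le3 4 3 1 v ha4 hb3 (by omega)))))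
            · exfalso
              have e0 := rho_mono (show v 0 ≤ 3 by omega)
              have e1 := rho_mono (show v 1 ≤ 3 by omega)
              have e2 := rho_mono (show v 2 ≤ 1 by omega)
              linarith
        · push_neg at hb3
          by_cases hb2 : v 1 = 2
          · by_cases hcz : v 2 = 0
            · exfalso
              rw [hcz, rho_zero, hb2, r2] at h4
              linarith [rho_lt_two (v 0)]
            · have hc1 : v 2 = 1 := by omega
              by_cases ha6 : 6 ≤ v 0
              · exact Or.inr (Or.inr (Or.inr (Or.inr (le3 6 2 1 v ha6 (by omega) (by omega)))))
              · exfalso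
                have e0 := rho_mono (show v 0 ≤ 5 by omega)
                rw [hb2, hc1, r2, r1] at h4
                linarith
          · exfalso
            have e1 := rho_mono (show v 1 ≤ 1 by omega)
            have e2 := rho_mono (show v 2 ≤ 1 by omega)
            linarith [rho_lt_two (v 0)]

/-- The set of minimal elements (for the coordinatewise partial
order on `Ṽ`) of `{v ∈ Ṽ : ρ(v) > 4}` is exactly
`K̂ = {(1,1,1,1,1), (2,1,1,1), (3,2,2), (4,3,1), (6,2,1)}`. -/
theorem rho_gt_four_minimal_solutions (w : ℕ → ℕ) (hw : IsVt w) :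
    (rhoV w > 4 ∧ ∀ v : ℕ → ℕ, IsVt v → rhoV v > 4 → (∀ i, v i ≤ w i) → v = w) ↔
      w = ofList [1, 1, 1, 1, 1] ∨ w = ofList [2, 1, 1, 1] ∨
      w = ofList [3, 2, 2] ∨ w = ofList [4, 3, 1] ∨ w = ofList [6, 2, 1] := by
  constructor
  · rintro ⟨h4, hmin⟩
    rcases exists_key w hw h4 with h | h | h | h | h
    · exact Or.inl (hmin _ (isVt_ofList _ (by decide)) gt11111 h).symm
    · exact Or.inr (Or.inl (hmin _ (isVt_ofList _ (by decide)) gt2111 h).symm)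
    · exact Or.inr (Or.inr (Or.inl (hmin _ (isVt_ofList _ (by decide)) gt322 h).symm))
    · exact Or.inr (Or.inr (Or.inr (Or.inl (hmin _ (isVt_ofList _ (by decide)) gt431 h).symm)))
    · exact Or.inr (Or.inr (Or.inr (Or.inr (hmin _ (isVt_ofList _ (by decide)) gt621 h).symm)))
  · rintro (rfl | rfl | rfl | rfl | rfl)
    · exact ⟨gt11111, fun v _ h4 hle => min11111 v hle h4⟩
    · exact ⟨gt2111, fun v _ h4 hle => min2111 v hle h4⟩
    · exact ⟨gt322, fun v _ h4 hle => min322 v hle h4⟩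
    · exact ⟨gt431, fun v _ h4 hle => min431 v hle h4⟩
    · exact ⟨gt621, fun v _ h4 hle => min621 v hle h4⟩
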